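/- Let a > 0 and let k : [0, ∞) → ℝ be continuous with k(s) ≤ −a² for all s, let F be the solution of F'' + kF = 0 with F(0) = 0, F'(0) = 1, and define g(r) = exp(−∫ᵣ^∞ dt/F(t)) for r > 0. Then g(r) → 0 as r → 0⁺ and the limit c = lim_{r→0⁺} g(r)/r exists and is a positive real number. -/

import Mathlib

open Set Real Filter Topology MeasureTheory

private lemma mono_aux {f : ℝ → ℝ} {D : Set ℝ} (hD : Convex ℝ D)
    (hc : ContinuousOn f D) (hd : ∀ t ∈ interior D, ∃ y, 0 ≤ y ∧ HasDerivAt f y t) :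
    MonotoneOn f D := by
  apply monotoneOn_of_deriv_nonneg hD hc
  · intro t ht; obtain ⟨y, _, hy⟩ := hd t ht
    exact hy.differentiableAt.differentiableWithinAt
  · intro t ht; obtain ⟨y, h0, hy⟩ := hd t ht; rw [hy.deriv]; exact h0

private lemma anti_aux {f : ℝ → ℝ} {D : Set ℝ} (hD : Convex ℝ D)
    (hc : ContinuousOn f D) (hd : ∀ t ∈ interior D, ∃ y, y ≤ 0 ∧ HasDerivAt f y t) :
    AntitoneOn f D := by
  apply antitoneOn_of_deriv_nonpos hD hc
  · intro t ht; obtain ⟨y, _, hy⟩ := hd t ht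
    exact hy.differentiableAt.differentiableWithinAt
  · intro t ht; obtain ⟨y, h0, hy⟩ := hd t ht; rw [hy.deriv]; exact h0

/-- Properties of `g(r) = exp(-∫ᵣ^∞ dt/F(t))` from Lemma 5: `g(r) → 0` as `r → 0⁺`
and `g(r)/r` converges to a positive limit `c` as `r → 0⁺`. -/
theorem stmt_11 (a : ℝ) (ha : 0 < a) (k F F' F'' : ℝ → ℝ)
    (hk_cont : ContinuousOn k (Set.Ici 0))
    (hk_le : ∀ s ∈ Set.Ici (0 : ℝ), k s ≤ -a ^ 2)
    (hF' : ∀ s ∈ Set.Ici (0 : ℝ), HasDerivWithinAt F (F' s) (Set.Ici 0) s)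
    (hF'' : ∀ s ∈ Set.Ici (0 : ℝ), HasDerivWithinAt F' (F'' s) (Set.Ici 0) s)
    (hF''_cont : ContinuousOn F'' (Set.Ici 0))
    (hODE : ∀ s ∈ Set.Ici (0 : ℝ), F'' s + k s * F s = 0)
    (hF0 : F 0 = 0) (hF'0 : F' 0 = 1)
    (g : ℝ → ℝ) (hg : ∀ r > (0 : ℝ), g r = Real.exp (-∫ t in Set.Ioi r, 1 / F t)) :
    Tendsto g (𝓝[>] 0) (𝓝 0) ∧
      ∃ c : ℝ, 0 < c ∧ Tendsto (fun r => g r / r) (𝓝[>] 0) (𝓝 c) := by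
  have hFc : ContinuousOn F (Ici 0) := fun s hs => (hF' s hs).continuousWithinAt
  have hF'c : ContinuousOn F' (Ici 0) := fun s hs => (hF'' s hs).continuousWithinAt
  have hFat : ∀ s : ℝ, 0 < s → HasDerivAt F (F' s) s := fun s hs =>
    (hF' s hs.le).hasDerivAt (Ici_mem_nhds hs)
  have hF'at : ∀ s : ℝ, 0 < s → HasDerivAt F' (F'' s) s := fun s hs =>
    (hF'' s hs.le).hasDerivAt (Ici_mem_nhds hs)
  -- F is positive just to the right of 0
  have hslope : Tendsto (fun s => F s / s) (𝓝[>] (0:ℝ)) (𝓝 1) := by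
    have h0 := hF' 0 (Set.self_mem_Ici)
    rw [hasDerivWithinAt_iff_tendsto_slope, Ici_sdiff_left, hF'0] at h0
    refine h0.congr fun s => ?_
    rw [slope_def_field, hF0, sub_zero, sub_zero]
  have hev : ∀ᶠ s in 𝓝[>] (0:ℝ), 0 < F s := by
    filter_upwards [hslope.eventually (eventually_gt_nhds zero_lt_one),
      self_mem_nhdsWithin] with s h1 h2
    rcases div_pos_iff.mp h1 with ⟨h, -⟩ | ⟨-, h⟩
    · exact h
    · exact absurd h2 (not_lt.mpr h.le)
  obtain ⟨δ, hδ0, hδ⟩ := mem_nhdsGT_iff_exists_Ioc_subset.mp hev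
  rw [mem_Ioi] at hδ0
  -- key comparison: if F ≥ 0 on (0,T) then F t ≥ t on [0,T]
  have key : ∀ T : ℝ, 0 < T → (∀ t : ℝ, 0 < t → t < T → 0 ≤ F t) →
      ∀ t ∈ Icc (0:ℝ) T, t ≤ F t := by
    intro T hT hFnn
    have hF''nn : ∀ t ∈ Ioo (0:ℝ) T, 0 ≤ F'' t := by
      intro t ht
      have hode := hODE t ht.1.le
      have hk := hk_le t ht.1.le
      have h1 : k t * F t ≤ -a ^ 2 * F t :=
        mul_le_mul_of_nonneg_right hk (hFnn t ht.1 ht.2)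
      have h2 : 0 ≤ a ^ 2 * F t := mul_nonneg (sq_nonneg a) (hFnn t ht.1 ht.2)
      linarith
    have hF'mono : MonotoneOn F' (Icc 0 T) := by
      apply mono_aux (convex_Icc 0 T) (hF'c.mono Icc_subset_Ici_self)
      rw [interior_Icc]
      exact fun t ht => ⟨F'' t, hF''nn t ht, hF'at t ht.1⟩
    have hF'ge1 : ∀ t ∈ Icc (0:ℝ) T, 1 ≤ F' t := by
      intro t ht
      have := hF'mono (left_mem_Icc.mpr hT.le) ht ht.1
      rwa [hF'0] at this
    have hGmono : MonotoneOn (fun s => F s - s) (Icc 0 T) := by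
      apply mono_aux (convex_Icc 0 T) ((hFc.mono Icc_subset_Ici_self).sub continuousOn_id)
      rw [interior_Icc]
      intro t ht
      refine ⟨F' t - 1, by linarith [hF'ge1 t ⟨ht.1.le, ht.2.le⟩], ?_⟩
      simpa using (hFat t ht.1).sub (hasDerivAt_id t)
    intro t ht
    have := hGmono (left_mem_Icc.mpr hT.le) ht ht.1
    simp only [hF0, sub_zero, zero_sub, neg_zero] at this
    linarith
  -- positivity of F on (0, ∞)
  have hpos : ∀ s : ℝ, 0 < s → 0 < F s := by
    by_contra h
    push_neg at h
    obtain ⟨s₀, hs₀, hFs₀⟩ := h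
    set S := {s : ℝ | 0 < s ∧ F s ≤ 0} with hS
    have hS_ne : S.Nonempty := ⟨s₀, hs₀, hFs₀⟩
    have hSδ : ∀ s ∈ S, δ < s := by
      intro s hs
      by_contra hle
      push_neg at hle
      exact absurd hs.2 (not_le.mpr (hδ ⟨hs.1, hle⟩))
    have hbdd : BddBelow S := ⟨δ, fun s hs => (hSδ s hs).le⟩
    set T := sInf S with hT
    have hTδ : δ ≤ T := le_csInf hS_ne fun s hs => (hSδ s hs).le
    have hT0 : 0 < T := lt_of_lt_of_le hδ0 hTδ
    have hFT : F T ≤ 0 := by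
      by_contra hFTpos
      push_neg at hFTpos
      have hcontT : ContinuousAt F T := (hFc.continuousAt (Ici_mem_nhds hT0) : _)
      have hevT : ∀ᶠ x in 𝓝 T, 0 < F x := hcontT.eventually (eventually_gt_nhds hFTpos)
      obtain ⟨ε, hε, hball⟩ := Metric.eventually_nhds_iff.mp hevT
      obtain ⟨s, hsS, hsT⟩ := (csInf_lt_iff hbdd hS_ne).mp (by linarith : T < T + ε)
      have hTs : T ≤ s := csInf_le hbdd hsS
      have : 0 < F s := hball (by rw [Real.dist_eq, abs_of_nonneg (by linarith)]; linarith)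
      exact absurd hsS.2 (not_le.mpr this)
    have hallpos : ∀ t : ℝ, 0 < t → t < T → 0 ≤ F t := by
      intro t ht htT
      by_contra hneg
      push_neg at hneg
      exact absurd (csInf_le hbdd ⟨ht, hneg.le⟩) (not_le.mpr htT)
    have := key T hT0 hallpos T (right_mem_Icc.mpr hT0.le)
    linarith
  have hFnn : ∀ s : ℝ, 0 ≤ s → 0 ≤ F s := by
    intro s hs
    rcases hs.eq_or_lt with h | h
    · simp [← h, hF0]
    · exact (hpos s h).le
  have hge : ∀ s : ℝ, 0 ≤ s → s ≤ F s := by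
    intro s hs
    rcases hs.eq_or_lt with h | h
    · simp [← h, hF0]
    · exact key (s + 1) (by linarith) (fun t ht _ => (hpos t ht).le) s ⟨hs, by linarith⟩
  have hF''ge : ∀ s : ℝ, 0 ≤ s → a ^ 2 * F s ≤ F'' s := by
    intro s hs
    have hode := hODE s hs
    have h1 : k s * F s ≤ -a ^ 2 * F s := mul_le_mul_of_nonneg_right (hk_le s hs) (hFnn s hs)
    linarith
  have hF''nn : ∀ s : ℝ, 0 ≤ s → 0 ≤ F'' s := fun s hs =>
    le_trans (mul_nonneg (sq_nonneg a) (hFnn s hs)) (hF''ge s hs)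
  have hF'mono : MonotoneOn F' (Ici 0) := by
    apply mono_aux (convex_Ici 0) hF'c
    rw [interior_Ici]
    exact fun t ht => ⟨F'' t, hF''nn t ht.le, hF'at t ht⟩
  have hF'ge : ∀ s : ℝ, 0 ≤ s → 1 ≤ F' s := by
    intro s hs
    have := hF'mono self_mem_Ici hs hs
    rwa [hF'0] at this
  have hFmono : MonotoneOn F (Ici 0) := by
    apply mono_aux (convex_Ici 0) hFc
    rw [interior_Ici]
    exact fun t ht => ⟨F' t, by linarith [hF'ge t ht.le], hFat t ht⟩
  -- energy estimate : F' s ≥ a F s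
  have hE : MonotoneOn (fun s => F' s ^ 2 - a ^ 2 * F s ^ 2) (Ici 0) := by
    apply mono_aux (convex_Ici 0) ((hF'c.pow 2).sub (continuousOn_const.mul (hFc.pow 2)))
    rw [interior_Ici]
    intro t ht
    have d1 : HasDerivAt (fun s => F' s ^ 2) (2 * F' t ^ 1 * F'' t) t := by
      simpa using (hF'at t ht).fun_pow 2
    have d2 : HasDerivAt (fun s => a ^ 2 * F s ^ 2) (a ^ 2 * (2 * F t ^ 1 * F' t)) t := by
      have : HasDerivAt (fun s => F s ^ 2) (2 * F t ^ 1 * F' t) t := by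
        simpa using (hFat t ht).fun_pow 2
      exact this.const_mul _
    refine ⟨_, ?_, d1.sub d2⟩
    have h1 := hF''ge t ht.le
    have h2 := hF'ge t ht.le
    have h3 := hFnn t ht.le
    have h4 : 0 ≤ F'' t - a ^ 2 * F t := by linarith
    have h5 : 0 ≤ F' t := by linarith
    have := mul_nonneg h5 h4
    simp only [pow_one]
    nlinarith
  have hE1 : ∀ s : ℝ, 0 ≤ s → 1 ≤ F' s ^ 2 - a ^ 2 * F s ^ 2 := by
    intro s hs
    have := hE self_mem_Ici hs hs
    simp only [hF0, hF'0] at this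
    nlinarith
  have haF : ∀ s : ℝ, 0 ≤ s → a * F s ≤ F' s := by
    intro s hs
    have h1 := hE1 s hs
    have h2 := hF'ge s hs
    have h3 : 0 ≤ a * F s := mul_nonneg ha.le (hFnn s hs)
    nlinarith
  -- exponential growth: F s ≥ exp (a s - a) for s ≥ 1
  have hGexp : MonotoneOn (fun s => F s * Real.exp (-a * s)) (Ici 0) := by
    apply mono_aux (convex_Ici 0) (hFc.mul (Real.continuous_exp.comp (continuous_const.mul continuous_id)).continuousOn)
    rw [interior_Ici]
    intro t ht
    have d3 : HasDerivAt (fun s => Real.exp (-a * s)) (Real.exp (-a * t) * (-a)) t := by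
      simpa using (((hasDerivAt_id t).const_mul (-a)).exp)
    refine ⟨_, ?_, (hFat t ht).mul d3⟩
    have h1 := haF t ht.le
    have h2 := (Real.exp_pos (-a * t)).le
    have h3 := mul_nonneg h2 (sub_nonneg.2 h1)
    simp only [Function.comp_apply, id_eq, Function.comp, Pi.mul_apply]
    nlinarith
  have hFexp : ∀ s : ℝ, 1 ≤ s → Real.exp (a * s - a) ≤ F s := by
    intro s hs
    have h0 : (1:ℝ) ∈ Ici (0:ℝ) := by norm_num
    have hs0 : s ∈ Ici (0:ℝ) := by simp; linarith
    have h := hGexp h0 hs0 hs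
    simp only at h
    have hF1 : 1 ≤ F 1 := hge 1 zero_le_one
    have h1 : Real.exp (-a * 1) ≤ F s * Real.exp (-a * s) := by
      nlinarith [Real.exp_pos (-a * 1)]
    have h2 := mul_le_mul_of_nonneg_right h1 (Real.exp_pos (a * s)).le
    rw [mul_assoc, ← Real.exp_add, ← Real.exp_add] at h2
    have e1 : -a * 1 + a * s = a * s - a := by ring
    have e2 : -a * s + a * s = 0 := by ring
    rw [e1, e2, Real.exp_zero, mul_one] at h2
    exact h2
  -- bound on [0,1] : F t ≤ t + C t²/2
  obtain ⟨M, hM⟩ := (isCompact_Icc : IsCompact (Icc (0:ℝ) 1)).exists_bound_of_continuousOn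
      (hk_cont.mono Icc_subset_Ici_self)
  have hM0 : 0 ≤ M := le_trans (norm_nonneg (k 0)) (hM 0 ⟨le_rfl, zero_le_one⟩)
  have hF1 : 1 ≤ F 1 := hge 1 zero_le_one
  set C := M * F 1 with hCdef
  have hC0 : 0 ≤ C := mul_nonneg hM0 (by linarith)
  have hF''le : ∀ t ∈ Ioo (0:ℝ) 1, F'' t ≤ C := by
    intro t ht
    have h1 : F'' t = -(k t) * F t := by linarith [hODE t ht.1.le]
    have h2 : -(k t) ≤ |k t| := neg_le_abs _
    have h3 : -(k t) * F t ≤ |k t| * F t := mul_le_mul_of_nonneg_right h2 (hFnn t ht.1.le)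
    have h4 : |k t| * F t ≤ M * F 1 := by
      have hk' : |k t| ≤ M := by
        have := hM t ⟨ht.1.le, ht.2.le⟩
        rwa [Real.norm_eq_abs] at this
      exact mul_le_mul hk' (hFmono (Set.mem_Ici.mpr ht.1.le) (Set.mem_Ici.mpr zero_le_one) ht.2.le) (hFnn t ht.1.le) hM0
    linarith
  have hF'le : ∀ t ∈ Icc (0:ℝ) 1, F' t ≤ 1 + C * t := by
    have hanti : AntitoneOn (fun s => F' s - C * s) (Icc 0 1) := by
      apply anti_aux (convex_Icc 0 1)
        ((hF'c.mono Icc_subset_Ici_self).sub (continuousOn_const.mul continuousOn_id))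
      rw [interior_Icc]
      intro t ht
      refine ⟨F'' t - C, by linarith [hF''le t ht], ?_⟩
      show HasDerivAt (fun s => F' s - C * s) _ t
      exact (hF'at t ht.1).sub (((hasDerivAt_id t).const_mul C).congr_deriv (mul_one C))
    intro t ht
    have := hanti (left_mem_Icc.mpr zero_le_one) ht ht.1
    simp only [hF'0, mul_zero, sub_zero] at this
    linarith
  have hFle : ∀ t ∈ Icc (0:ℝ) 1, F t ≤ t + C / 2 * t ^ 2 := by
    have hanti : AntitoneOn (fun s => F s - s - C / 2 * s ^ 2) (Icc 0 1) := by
      apply anti_aux (convex_Icc 0 1)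
      · exact ((hFc.mono Icc_subset_Ici_self).sub continuousOn_id).sub
          (continuousOn_const.mul (continuousOn_id.pow 2))
      rw [interior_Icc]
      intro t ht
      refine ⟨F' t - 1 - C / 2 * (2 * t ^ 1), ?_, ?_⟩
      · have := hF'le t ⟨ht.1.le, ht.2.le⟩
        simp only [pow_one]
        linarith
      · exact ((hFat t ht.1).sub (hasDerivAt_id t)).sub ((hasDerivAt_pow 2 t).const_mul (C / 2))
    intro t ht
    have := hanti (left_mem_Icc.mpr zero_le_one) ht ht.1
    simp only [hF0] at this
    norm_num at this
    linarith
  -- pointwise bounds for the integrands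
  have hphi : ∀ t ∈ Ioc (0:ℝ) 1, 0 ≤ 1 / t - 1 / F t ∧ 1 / t - 1 / F t ≤ C / 2 := by
    intro t ht
    have ht0 := ht.1
    have hFt := hpos t ht.1
    have h1 : t ≤ F t := hge t ht.1.le
    have h2 : F t ≤ t + C / 2 * t ^ 2 := hFle t ⟨ht.1.le, ht.2⟩
    constructor
    · have := one_div_le_one_div_of_le ht0 h1
      linarith
    · have heq : 1 / t - 1 / F t = (F t - t) / (t * F t) := by
        field_simp
      rw [heq, div_le_iff₀ (by positivity)]
      nlinarith [mul_le_mul_of_nonneg_left (mul_le_mul_of_nonneg_left h1 ht0.le)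
        (by linarith : (0:ℝ) ≤ C / 2)]
  have hFle' : ∀ t ∈ Ioc (0:ℝ) 1, F t ≤ (1 + C / 2) * t := by
    intro t ht
    have h2 : F t ≤ t + C / 2 * t ^ 2 := hFle t ⟨ht.1.le, ht.2⟩
    nlinarith [mul_le_mul_of_nonneg_left ht.2 (mul_nonneg hC0 ht.1.le)]
  -- continuity / integrability of 1/F
  have hfc : ContinuousOn (fun t => 1 / F t) (Ioi 0) :=
    continuousOn_const.div (hFc.mono Ioi_subset_Ici_self) fun s hs => (hpos s hs).ne'
  have hfnn : ∀ t ∈ Ioi (0:ℝ), 0 ≤ 1 / F t := fun t ht => le_of_lt (one_div_pos.mpr (hpos t ht))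
  have intIoc : ∀ r : ℝ, 0 < r → IntegrableOn (fun t => 1 / F t) (Ioc r 1) := by
    intro r hr
    apply (ContinuousOn.integrableOn_Icc (hfc.mono fun t ht =>
      lt_of_lt_of_le hr ht.1)).mono_set Ioc_subset_Icc_self
  have intOneDiv : ∀ r : ℝ, 0 < r → IntegrableOn (fun t : ℝ => 1 / t) (Ioc r 1) := by
    intro r hr
    apply (ContinuousOn.integrableOn_Icc ((continuousOn_const.div continuousOn_id
      fun t ht => (lt_of_lt_of_le hr ht.1).ne') : ContinuousOn (fun t : ℝ => 1 / t)
        (Icc r 1))).mono_set Ioc_subset_Icc_self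
  have intTail : IntegrableOn (fun t => 1 / F t) (Ioi 1) := by
    have hexp : IntegrableOn (fun t : ℝ => Real.exp a * Real.exp (-a * t)) (Ioi 1) :=
      (exp_neg_integrableOn_Ioi 1 ha).const_mul _
    apply hexp.mono' ((hfc.mono fun t (ht : t ∈ Ioi 1) =>
      lt_trans zero_lt_one ht).aestronglyMeasurable measurableSet_Ioi)
    rw [ae_restrict_iff' measurableSet_Ioi]
    filter_upwards with t ht
    rw [Real.norm_eq_abs, abs_of_nonneg (hfnn t (mem_Ioi.mpr (lt_trans zero_lt_one ht)))]
    have h1 : Real.exp (a * t - a) ≤ F t := hFexp t ht.le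
    calc 1 / F t ≤ 1 / Real.exp (a * t - a) :=
          one_div_le_one_div_of_le (Real.exp_pos _) h1
      _ = Real.exp a * Real.exp (-a * t) := by
          rw [one_div, ← Real.exp_neg, ← Real.exp_add]
          congr 1
          ring
  have Isplit : ∀ r : ℝ, 0 < r → r ≤ 1 → (∫ t in Ioi r, 1 / F t) =
      (∫ t in Ioc r 1, 1 / F t) + ∫ t in Ioi 1, 1 / F t := by
    intro r hr hr1
    rw [← Ioc_union_Ioi_eq_Ioi hr1, setIntegral_union (Ioc_disjoint_Ioi le_rfl)
      measurableSet_Ioi (intIoc r hr) intTail]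
  have hlog : ∀ r : ℝ, 0 < r → r ≤ 1 → (∫ t in Ioc r 1, (1:ℝ) / t) = -Real.log r := by
    intro r hr hr1
    rw [← intervalIntegral.integral_of_le hr1, integral_one_div, one_div, Real.log_inv]
    rw [Set.uIcc_of_le hr1]
    rintro ⟨h0, -⟩
    linarith
  -- Part 1 : g → 0
  have hc' : (0:ℝ) < 1 / (1 + C / 2) := one_div_pos.mpr (by linarith)
  have hIlow : ∀ r ∈ Ioo (0:ℝ) 1, 1 / (1 + C / 2) * (-Real.log r) ≤ ∫ t in Ioi r, 1 / F t := by
    intro r hr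
    rw [Isplit r hr.1 hr.2.le]
    have hlow : ∀ t ∈ Ioc r 1, 1 / (1 + C / 2) * (1 / t) ≤ 1 / F t := by
      intro t ht
      have ht' : t ∈ Ioc (0:ℝ) 1 := ⟨lt_trans hr.1 ht.1, ht.2⟩
      have h1 := one_div_le_one_div_of_le (hpos t ht'.1) (hFle' t ht')
      calc 1 / (1 + C / 2) * (1 / t) = 1 / ((1 + C / 2) * t) := by
            rw [div_mul_div_comm, one_mul]
        _ ≤ 1 / F t := h1
    have h1 : (∫ t in Ioc r 1, 1 / (1 + C / 2) * (1 / t)) ≤ ∫ t in Ioc r 1, 1 / F t :=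
      setIntegral_mono_on ((intOneDiv r hr.1).const_mul _) (intIoc r hr.1)
        measurableSet_Ioc hlow
    rw [integral_const_mul, hlog r hr.1 hr.2.le] at h1
    have h2 : 0 ≤ ∫ t in Ioi 1, 1 / F t :=
      setIntegral_nonneg measurableSet_Ioi fun t ht => hfnn t (mem_Ioi.mpr (lt_trans zero_lt_one ht))
    linarith
  have hItop : Tendsto (fun r => ∫ t in Ioi r, 1 / F t) (𝓝[>] (0:ℝ)) atTop := by
    have hbase : Tendsto (fun r : ℝ => 1 / (1 + C / 2) * (-Real.log r)) (𝓝[>] (0:ℝ)) atTop := by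
      have h1 : Tendsto (fun r : ℝ => -Real.log r) (𝓝[>] (0:ℝ)) atTop :=
        tendsto_neg_atBot_atTop.comp Real.tendsto_log_nhdsGT_zero
      exact h1.const_mul_atTop hc'
    apply tendsto_atTop_mono' _ _ hbase
    filter_upwards [Ioo_mem_nhdsGT_of_mem (left_mem_Ico.mpr one_pos)] with r hr
    exact hIlow r hr
  have hg0 : Tendsto g (𝓝[>] (0:ℝ)) (𝓝 0) := by
    have h2 : Tendsto (fun r => Real.exp (-∫ t in Ioi r, 1 / F t)) (𝓝[>] (0:ℝ)) (𝓝 0) :=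
      Real.tendsto_exp_atBot.comp (tendsto_neg_atTop_atBot.comp hItop)
    apply Tendsto.congr' _ h2
    filter_upwards [self_mem_nhdsWithin] with r hr
    exact (hg r hr).symm
  -- Part 2 : g(r)/r → c
  have hφint : ∀ r : ℝ, 0 ≤ r → IntegrableOn (fun t => 1 / t - 1 / F t) (Ioc r 1) := by
    intro r hr
    have hsub : Ioc r 1 ⊆ Ioi (0:ℝ) := fun t ht => lt_of_le_of_lt hr ht.1
    have hφc : ContinuousOn (fun t : ℝ => 1 / t - 1 / F t) (Ioc r 1) :=
      ((continuousOn_const.div continuousOn_id fun t ht => (hsub ht).ne').sub (hfc.mono hsub))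
    refine Integrable.mono' (g := fun _ => C / 2)
      ((integrableOn_const_iff (C := C / 2)).mpr (Or.inr measure_Ioc_lt_top))
      (hφc.aestronglyMeasurable measurableSet_Ioc) ?_
    rw [ae_restrict_iff' measurableSet_Ioc]
    filter_upwards with t ht
    have ht' : t ∈ Ioc (0:ℝ) 1 := ⟨lt_of_le_of_lt hr ht.1, ht.2⟩
    rw [Real.norm_eq_abs, abs_of_nonneg (hphi t ht').1]
    exact (hphi t ht').2
  have heq2 : ∀ r ∈ Ioo (0:ℝ) 1, g r / r =
      Real.exp ((∫ t in Ioc r 1, (1 / t - 1 / F t)) - ∫ t in Ioi 1, 1 / F t) := by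
    intro r hr
    rw [hg r hr.1]
    have hsub : (∫ t in Ioc r 1, (1 / t - 1 / F t)) =
        (∫ t in Ioc r 1, (1:ℝ) / t) - ∫ t in Ioc r 1, 1 / F t :=
      integral_sub (intOneDiv r hr.1) (intIoc r hr.1)
    rw [hlog r hr.1 hr.2.le] at hsub
    have hr' : Real.exp (-Real.log r) = r⁻¹ := by rw [Real.exp_neg, Real.exp_log hr.1]
    rw [Isplit r hr.1 hr.2.le, div_eq_mul_inv, ← hr', ← Real.exp_add]
    congr 1
    linarith
  have hLlim : Tendsto (fun r => ∫ t in Ioc r 1, (1 / t - 1 / F t)) (𝓝[>] (0:ℝ))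
      (𝓝 (∫ t in Ioc (0:ℝ) 1, (1 / t - 1 / F t))) := by
    rw [tendsto_iff_dist_tendsto_zero]
    apply squeeze_zero' (Eventually.of_forall fun r => dist_nonneg)
      (g := fun r => C / 2 * r)
    · filter_upwards [Ioo_mem_nhdsGT_of_mem (left_mem_Ico.mpr one_pos)] with r hr
      have hsplit : (∫ t in Ioc (0:ℝ) 1, (1 / t - 1 / F t)) =
          (∫ t in Ioc (0:ℝ) r, (1 / t - 1 / F t)) + ∫ t in Ioc r 1, (1 / t - 1 / F t) := by
        rw [← setIntegral_union (Ioc_disjoint_Ioc_of_le le_rfl) measurableSet_Ioc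
          ((hφint 0 le_rfl).mono_set (Ioc_subset_Ioc_right hr.2.le)) (hφint r hr.1.le),
          Ioc_union_Ioc_eq_Ioc hr.1.le hr.2.le]
      have hb : ‖∫ t in Ioc (0:ℝ) r, (1 / t - 1 / F t)‖ ≤ C / 2 * (volume (Ioc (0:ℝ) r)).toReal := by
        apply norm_setIntegral_le_of_norm_le_const measure_Ioc_lt_top
        intro t ht
        have ht' : t ∈ Ioc (0:ℝ) 1 := ⟨ht.1, le_trans ht.2 hr.2.le⟩
        rw [Real.norm_eq_abs, abs_of_nonneg (hphi t ht').1]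
        exact (hphi t ht').2
      rw [Real.volume_Ioc, ENNReal.toReal_ofReal (by linarith [hr.1] : (0:ℝ) ≤ r - 0)] at hb
      rw [Real.dist_eq]
      rw [Real.norm_eq_abs] at hb
      have : |(∫ t in Ioc r 1, (1 / t - 1 / F t)) - ∫ t in Ioc (0:ℝ) 1, (1 / t - 1 / F t)| =
          |∫ t in Ioc (0:ℝ) r, (1 / t - 1 / F t)| := by
        rw [hsplit]
        rw [abs_sub_comm]
        congr 1
        ring
      rw [this]
      calc |∫ t in Ioc (0:ℝ) r, (1 / t - 1 / F t)| ≤ C / 2 * (r - 0) := hb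
        _ = C / 2 * r := by ring
    · have : Tendsto (fun r : ℝ => C / 2 * r) (𝓝 0) (𝓝 (C / 2 * 0)) :=
        (tendsto_id.const_mul _)
      simpa using this.mono_left nhdsWithin_le_nhds
  refine ⟨hg0, Real.exp ((∫ t in Ioc (0:ℝ) 1, (1 / t - 1 / F t)) - ∫ t in Ioi 1, 1 / F t),
    Real.exp_pos _, ?_⟩
  have h3 : Tendsto (fun r => Real.exp ((∫ t in Ioc r 1, (1 / t - 1 / F t)) -
      ∫ t in Ioi 1, 1 / F t)) (𝓝[>] (0:ℝ))
      (𝓝 (Real.exp ((∫ t in Ioc (0:ℝ) 1, (1 / t - 1 / F t)) - ∫ t in Ioi 1, 1 / F t))) :=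
    (Real.continuous_exp.tendsto _).comp (hLlim.sub_const _)
  apply Tendsto.congr' _ h3
  filter_upwards [Ioo_mem_nhdsGT_of_mem (left_mem_Ico.mpr one_pos)] with r hr
  exact (heq2 r hr).symm
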